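/- For every real number γ with 0 < γ < 1, the partial sums S(n) = Σ_{k=1}^n e^{k^γ} satisfy S(n) ~ (n^{1-γ}/γ)·e^{n^γ} as n → ∞, i.e. the ratio S(n)·γ·n^{γ-1}·e^{-n^γ} tends to 1. -/

import Mathlib

open Filter Finset Real Asymptotics Set Topology

/-- The comparison function `B(x) = x^(1-γ)/γ * exp(x^γ)`. -/
private noncomputable def Bf (γ : ℝ) (x : ℝ) : ℝ := x ^ (1 - γ) / γ * Real.exp (x ^ γ)

private lemma Bf_hasDerivAt {γ : ℝ} (h0 : 0 < γ) (h1 : γ < 1) {x : ℝ} (hx : 0 < x) :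
    HasDerivAt (Bf γ) (Real.exp (x ^ γ) * (1 + (1 - γ) / γ * x ^ (-γ))) x := by
  have hx' : x ≠ 0 := hx.ne'
  have d1 : HasDerivAt (fun y : ℝ => y ^ (1 - γ)) ((1 - γ) * x ^ (1 - γ - 1)) x :=
    Real.hasDerivAt_rpow_const (Or.inl hx')
  have d2 : HasDerivAt (fun y : ℝ => y ^ γ) (γ * x ^ (γ - 1)) x :=
    Real.hasDerivAt_rpow_const (Or.inl hx')
  have d3 : HasDerivAt (fun y : ℝ => Real.exp (y ^ γ))
      (Real.exp (x ^ γ) * (γ * x ^ (γ - 1))) x := (Real.hasDerivAt_exp _).comp x d2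
  have H : HasDerivAt (Bf γ) ((1 - γ) * x ^ (1 - γ - 1) / γ * Real.exp (x ^ γ) +
      x ^ (1 - γ) / γ * (Real.exp (x ^ γ) * (γ * x ^ (γ - 1)))) x := (d1.div_const γ).mul d3
  convert H using 1
  have e1 : x ^ (1 - γ) * x ^ (γ - 1) = 1 := by
    rw [← Real.rpow_add hx]; norm_num
  have e2 : x ^ (1 - γ - 1) = x ^ (-γ) := by congr 1; ring
  rw [e2] at *
  have hγγ : γ * γ⁻¹ = 1 := mul_inv_cancel₀ h0.ne'
  linear_combination (-(Real.exp (x ^ γ))) * e1 +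
    (-(Real.exp (x ^ γ) * (x ^ (1 - γ) * x ^ (γ - 1)))) * hγγ

private lemma mvt_unit {f f' : ℝ → ℝ} {a : ℝ}
    (hc : ContinuousOn f (Set.Icc a (a + 1)))
    (hd : ∀ x ∈ Set.Ioo a (a + 1), HasDerivAt f (f' x) x) :
    ∃ ξ ∈ Set.Ioo a (a + 1), f (a + 1) - f a = f' ξ := by
  obtain ⟨ξ, hξ, h⟩ := exists_hasDerivAt_eq_slope f f' (by linarith) hc hd
  refine ⟨ξ, hξ, ?_⟩
  rw [h, add_sub_cancel_left, div_one]

private lemma Bf_continuous {γ : ℝ} (h0 : 0 < γ) (h1 : γ < 1) : Continuous (Bf γ) := by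
  have c1 : Continuous fun x : ℝ => x ^ (1 - γ) :=
    Real.continuous_rpow_const (by linarith)
  have c2 : Continuous fun x : ℝ => x ^ γ := Real.continuous_rpow_const h0.le
  exact (c1.div_const γ).mul (Real.continuous_exp.comp c2)

theorem stmt_0 (γ : ℝ) (h0 : 0 < γ) (h1 : γ < 1) :
    Filter.Tendsto
      (fun n : ℕ =>
        (∑ k ∈ Finset.Icc 1 n, Real.exp ((k : ℝ) ^ γ)) * γ * (n : ℝ) ^ (γ - 1) *
          Real.exp (-(n : ℝ) ^ γ))
      Filter.atTop (nhds 1) := by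
  have hγ1 : (0:ℝ) < 1 - γ := by linarith
  set c : ℝ := (1 - γ) / γ with hc
  have hcpos : 0 < c := div_pos hγ1 h0
  set F : ℕ → ℝ := fun i => Real.exp (((i : ℝ) + 1) ^ γ) with hF
  set G : ℕ → ℝ := fun i => Bf γ ((i : ℝ) + 1) - Bf γ (i : ℝ) with hG
  -- MVT for Bf on each [i, i+1]
  have hmvt : ∀ i : ℕ, ∃ ξ ∈ Set.Ioo (i : ℝ) ((i : ℝ) + 1),
      G i = Real.exp (ξ ^ γ) * (1 + c * ξ ^ (-γ)) := by
    intro i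
    obtain ⟨ξ, hξ, h⟩ := mvt_unit ((Bf_continuous h0 h1).continuousOn)
      (fun x hx => Bf_hasDerivAt h0 h1 ((Nat.cast_nonneg i).trans_lt hx.1))
    exact ⟨ξ, hξ, h⟩
  choose ξ hξmem hξeq using hmvt
  have hξpos : ∀ i : ℕ, (i : ℝ) < ξ i ∧ ξ i < (i : ℝ) + 1 := fun i =>
    ⟨(hξmem i).1, (hξmem i).2⟩
  have hGpos : ∀ i, 0 < G i := by
    intro i
    have hx0 : (0:ℝ) < ξ i := (Nat.cast_nonneg i).trans_lt (hξpos i).1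
    have h4 : (0:ℝ) ≤ c * (ξ i) ^ (-γ) :=
      mul_nonneg hcpos.le (Real.rpow_nonneg hx0.le _)
    rw [hξeq i]
    exact mul_pos (Real.exp_pos _) (by linarith)
  -- MVT for x ^ γ gives (i+1)^γ - i^γ → 0
  have hrmvt : ∀ i : ℕ, ∃ η ∈ Set.Ioo (i : ℝ) ((i : ℝ) + 1),
      ((i : ℝ) + 1) ^ γ - (i : ℝ) ^ γ = γ * η ^ (γ - 1) := by
    intro i
    exact mvt_unit ((Real.continuous_rpow_const h0.le).continuousOn)
      (fun x hx => Real.hasDerivAt_rpow_const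
        (Or.inl ((Nat.cast_nonneg i).trans_lt hx.1).ne'))
  have hstep0 : ∀ i : ℕ, 0 ≤ ((i : ℝ) + 1) ^ γ - (i : ℝ) ^ γ := by
    intro i
    have := Real.rpow_le_rpow (Nat.cast_nonneg i) (by linarith : (i:ℝ) ≤ (i:ℝ) + 1) h0.le
    linarith
  have hstep1 : ∀ i : ℕ, 1 ≤ i → ((i : ℝ) + 1) ^ γ - (i : ℝ) ^ γ ≤ γ * (i : ℝ) ^ (γ - 1) := by
    intro i hi
    obtain ⟨η, hη, h⟩ := hrmvt i
    have hi0 : (0:ℝ) < i := by exact_mod_cast hi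
    have : η ^ (γ - 1) ≤ (i : ℝ) ^ (γ - 1) :=
      Real.rpow_le_rpow_of_nonpos hi0 hη.1.le (by linarith)
    rw [h]; nlinarith
  have hpow_inv : Tendsto (fun i : ℕ => (i : ℝ) ^ (-γ)) atTop (𝓝 0) :=
    (tendsto_rpow_neg_atTop h0).comp tendsto_natCast_atTop_atTop
  have hpow_inv' : Tendsto (fun i : ℕ => γ * (i : ℝ) ^ (γ - 1)) atTop (𝓝 0) := by
    have h := ((tendsto_rpow_neg_atTop hγ1).comp tendsto_natCast_atTop_atTop).const_mul γ
    rw [mul_zero] at h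
    refine h.congr fun i => ?_
    simp only [Function.comp]
    congr 1
    · congr 1; ring
  have hdiff0 : Tendsto (fun i : ℕ => ((i : ℝ) + 1) ^ γ - (i : ℝ) ^ γ) atTop (𝓝 0) := by
    refine tendsto_of_tendsto_of_tendsto_of_le_of_le' tendsto_const_nhds hpow_inv' ?_ ?_
    · exact Eventually.of_forall hstep0
    · filter_upwards [eventually_ge_atTop 1] with i hi using hstep1 i hi
  -- the ratio G/F tends to 1
  have hkey : ∀ i : ℕ, G i / F i =
      Real.exp ((ξ i) ^ γ - ((i : ℝ) + 1) ^ γ) * (1 + c * (ξ i) ^ (-γ)) := by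
    intro i
    rw [hξeq i, Real.exp_sub, hF]
    ring
  have hlow : Tendsto (fun i : ℕ => Real.exp ((i : ℝ) ^ γ - ((i : ℝ) + 1) ^ γ)) atTop (𝓝 1) := by
    have hneg : Tendsto (fun i : ℕ => (i : ℝ) ^ γ - ((i : ℝ) + 1) ^ γ) atTop (𝓝 0) := by
      have := hdiff0.neg
      rw [neg_zero] at this
      exact this.congr fun i => by ring
    have := (Real.continuous_exp.tendsto 0).comp hneg
    rwa [Real.exp_zero] at this
  have hup : Tendsto (fun i : ℕ => 1 + c * (i : ℝ) ^ (-γ)) atTop (𝓝 1) := by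
    have := (hpow_inv.const_mul c).const_add 1
    rwa [mul_zero, add_zero] at this
  have hratio : Tendsto (fun i : ℕ => G i / F i) atTop (𝓝 1) := by
    refine tendsto_of_tendsto_of_tendsto_of_le_of_le' hlow hup ?_ ?_
    · filter_upwards [eventually_ge_atTop 1] with i hi
      rw [hkey i]
      have hx0 : (0:ℝ) < ξ i := (Nat.cast_nonneg i).trans_lt (hξpos i).1
      have h1' : (i : ℝ) ^ γ ≤ (ξ i) ^ γ :=
        Real.rpow_le_rpow (Nat.cast_nonneg i) (hξpos i).1.le h0.le
      have h2' : Real.exp ((i : ℝ) ^ γ - ((i : ℝ) + 1) ^ γ) ≤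
          Real.exp ((ξ i) ^ γ - ((i : ℝ) + 1) ^ γ) := Real.exp_le_exp.2 (by linarith)
      have h3' : (0:ℝ) ≤ c * (ξ i) ^ (-γ) :=
        mul_nonneg hcpos.le (Real.rpow_nonneg hx0.le _)
      nlinarith [Real.exp_pos ((i : ℝ) ^ γ - ((i : ℝ) + 1) ^ γ)]
    · filter_upwards [eventually_ge_atTop 1] with i hi
      rw [hkey i]
      have hi0 : (0:ℝ) < i := by exact_mod_cast hi
      have hx0 : (0:ℝ) < ξ i := hi0.trans (hξpos i).1
      have h1' : (ξ i) ^ γ ≤ ((i : ℝ) + 1) ^ γ :=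
        Real.rpow_le_rpow hx0.le (hξpos i).2.le h0.le
      have h2' : Real.exp ((ξ i) ^ γ - ((i : ℝ) + 1) ^ γ) ≤ 1 :=
        Real.exp_le_one_iff.2 (by linarith)
      have h3' : (ξ i) ^ (-γ) ≤ (i : ℝ) ^ (-γ) :=
        Real.rpow_le_rpow_of_nonpos hi0 (hξpos i).1.le (by linarith)
      have h4' : (0:ℝ) ≤ (ξ i) ^ (-γ) := Real.rpow_nonneg hx0.le _
      have h5 : Real.exp ((ξ i) ^ γ - ((i : ℝ) + 1) ^ γ) * (1 + c * (ξ i) ^ (-γ)) ≤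
          1 + c * (ξ i) ^ (-γ) :=
        mul_le_of_le_one_left (by nlinarith) h2'
      have h6 : c * (ξ i) ^ (-γ) ≤ c * (i : ℝ) ^ (-γ) :=
        mul_le_mul_of_nonneg_left h3' hcpos.le
      linarith
  -- little-o comparison of the summands
  have hFdivG : Tendsto (fun i : ℕ => F i / G i) atTop (𝓝 1) := by
    have h := hratio.inv₀ one_ne_zero
    rw [inv_one] at h
    exact h.congr fun i => by rw [inv_div]
  have hFG : (fun i : ℕ => F i - G i) =o[atTop] G := by
    rw [isLittleO_iff_tendsto fun i h => absurd h (hGpos i).ne']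
    have h := hFdivG.sub_const 1
    rw [sub_self] at h
    exact h.congr fun i => by rw [sub_div, div_self (hGpos i).ne']
  have hsumG : ∀ n : ℕ, ∑ i ∈ Finset.range n, G i = Bf γ (n : ℝ) := by
    intro n
    have h : ∑ i ∈ Finset.range n, G i =
        (fun i : ℕ => Bf γ (i : ℝ)) n - (fun i : ℕ => Bf γ (i : ℝ)) 0 := by
      rw [← Finset.sum_range_sub (fun i : ℕ => Bf γ (i : ℝ)) n]
      exact Finset.sum_congr rfl fun i _ => by push_cast; rfl
    rw [h]
    simp [Bf, Real.zero_rpow hγ1.ne', Real.zero_rpow h0.ne']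
  have hBtop : Tendsto (fun n : ℕ => Bf γ (n : ℝ)) atTop atTop := by
    have hA : Tendsto (fun x : ℝ => x ^ (1 - γ) / γ) atTop atTop :=
      (tendsto_rpow_atTop hγ1).atTop_div_const h0
    have hB : Tendsto (fun x : ℝ => Real.exp (x ^ γ)) atTop atTop :=
      Real.tendsto_exp_atTop.comp (tendsto_rpow_atTop h0)
    exact (hA.atTop_mul_atTop₀ hB).comp tendsto_natCast_atTop_atTop
  have hsumGtop : Tendsto (fun n : ℕ => ∑ i ∈ Finset.range n, G i) atTop atTop :=
    hBtop.congr fun n => (hsumG n).symm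
  have hsum : (fun n : ℕ => (∑ i ∈ Finset.range n, F i) - ∑ i ∈ Finset.range n, G i)
      =o[atTop] fun n => ∑ i ∈ Finset.range n, G i := by
    have := hFG.sum_range (fun i => (hGpos i).le) hsumGtop
    exact this.congr_left fun n => by rw [Finset.sum_sub_distrib]
  have hmain : Tendsto (fun n : ℕ => (∑ i ∈ Finset.range n, F i) / Bf γ (n : ℝ))
      atTop (𝓝 1) := by
    have hGne : ∀ᶠ n : ℕ in atTop, (0:ℝ) < ∑ i ∈ Finset.range n, G i :=
      hsumGtop.eventually_gt_atTop 0
    have h0' : Tendsto (fun n : ℕ =>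
        ((∑ i ∈ Finset.range n, F i) - ∑ i ∈ Finset.range n, G i) /
          ∑ i ∈ Finset.range n, G i) atTop (𝓝 0) := by
      refine (isLittleO_iff_tendsto' ?_).1 hsum
      filter_upwards [hGne] with n hn h using absurd h hn.ne'
    have h1' := h0'.add_const 1
    rw [zero_add] at h1'
    refine h1'.congr' ?_
    filter_upwards [hGne] with n hn
    rw [sub_div, div_self hn.ne', ← hsumG n]
    ring
  -- convert to the stated form
  refine hmain.congr' ?_
  filter_upwards [eventually_ge_atTop 1] with n hn
  have hn0 : (0:ℝ) < n := by exact_mod_cast hn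
  have hsumF : ∑ k ∈ Finset.Icc 1 n, Real.exp ((k : ℝ) ^ γ) = ∑ i ∈ Finset.range n, F i := by
    rw [← Finset.Ico_add_one_right_eq_Icc, Finset.sum_Ico_eq_sum_range, Nat.add_sub_cancel]
    exact Finset.sum_congr rfl fun i _ => by push_cast; rw [add_comm]
  have hx1 : (0:ℝ) < (n : ℝ) ^ (1 - γ) := Real.rpow_pos_of_pos hn0 _
  have e3 : (n : ℝ) ^ (γ - 1) = ((n : ℝ) ^ (1 - γ))⁻¹ := by
    rw [← Real.rpow_neg hn0.le]
    congr 1; ring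
  rw [hsumF, Bf, e3, Real.exp_neg]
  field_simp
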